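/- For every even integer n with n ≥ k ≥ 2, the optimal number of queries in the Plurality game with n balls, 3 colors and query size k satisfies A_p(n,k) ≥ (n−2)/(k−1) + n/(2(k−1)^2). -/

import Mathlib

/-!
Formalization of the adaptive Plurality/Partition games with `n` balls, 3 colors
and queries of size `k`.

A coloring is a function `Fin n → Fin 3`.  The Adversary's answer to a query
`q : Finset (Fin n)` under a coloring `c` is the partition of `q` into color
classes, encoded as the set of pairs of elements of `q` receiving the same color.
A (deterministic, adaptive) Questioner strategy maps the list of answers received
so far to the next query.  `Ap n k` (resp. `Ac n k`) is the least `m` such that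
some strategy using queries of size `k` is guaranteed to have determined the
solution of the Plurality (resp. Partition) problem after `m` queries, i.e. the
optimal worst-case number of queries.
-/

namespace PluralityGame

/-- The answer to query `q` under coloring `c`: the partition of `q` into color
classes, encoded by which pairs of balls of `q` get the same color. -/
def answer {n : ℕ} (c : Fin n → Fin 3) (q : Finset (Fin n)) : Finset (Fin n × Fin n) :=
  (q ×ˢ q).filter (fun p => c p.1 = c p.2)

/-- An adaptive Questioner strategy: given the answers received so far, produce
the next query. -/
abbrev Strategy (n : ℕ) := List (Finset (Fin n × Fin n)) → Finset (Fin n)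

/-- A strategy is valid for query size `k` if every query it asks has `k` elements. -/
def Strategy.Valid {n : ℕ} (s : Strategy n) (k : ℕ) : Prop :=
  ∀ h, (s h).card = k

/-- The list of answers received during the first `t` rounds when the strategy `s`
plays against answers induced by the coloring `c`. -/
def history {n : ℕ} (s : Strategy n) (c : Fin n → Fin 3) : ℕ → List (Finset (Fin n × Fin n))
  | 0 => []
  | t + 1 => history s c t ++ [answer c (s (history s c t))]

/-- `c'` is consistent with all the answers given during the first `t` rounds of
`s` playing against `c` (it would have produced exactly the same transcript). -/
def Consistent {n : ℕ} (s : Strategy n) (c c' : Fin n → Fin 3) (t : ℕ) : Prop :=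
  history s c' t = history s c t

/-- `b` is a plurality ball for the coloring `c`: its color class is strictly
larger than each of the other two color classes. -/
def IsPlurality {n : ℕ} (c : Fin n → Fin 3) (b : Fin n) : Prop :=
  ∀ j : Fin 3, j ≠ c b →
    (Finset.univ.filter fun x => c x = j).card <
      (Finset.univ.filter fun x => c x = c b).card

/-- After `m` queries, the strategy `s` is guaranteed to have determined the
solution of the Plurality problem: whatever the Adversary's (consistent) answers,
either some fixed ball is a plurality ball under every consistent coloring, or no
consistent coloring has a plurality ball. -/
def SolvesPlurality {n : ℕ} (s : Strategy n) (m : ℕ) : Prop :=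
  ∀ c : Fin n → Fin 3,
    (∃ b : Fin n, ∀ c', Consistent s c c' m → IsPlurality c' b) ∨
    (∀ c', Consistent s c c' m → ∀ b, ¬ IsPlurality c' b)

/-- After `m` queries, the strategy `s` is guaranteed to have determined the
partition of the balls into color classes (up to permutation of the colors):
all consistent colorings induce the same unordered partition. -/
def SolvesPartition {n : ℕ} (s : Strategy n) (m : ℕ) : Prop :=
  ∀ c c' : Fin n → Fin 3, Consistent s c c' m →
    ∀ x y : Fin n, c' x = c' y ↔ c x = c y

/-- The optimal worst-case number of queries for the Plurality problem with `n`
balls, 3 colors, and queries of size `k`. -/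
noncomputable def Ap (n k : ℕ) : ℕ :=
  sInf { m | ∃ s : Strategy n, s.Valid k ∧ SolvesPlurality s m }

/-- The optimal worst-case number of queries for the Partition problem with `n`
balls, 3 colors, and queries of size `k`. -/
noncomputable def Ac (n k : ℕ) : ℕ :=
  sInf { m | ∃ s : Strategy n, s.Valid k ∧ SolvesPartition s m }

end PluralityGame


namespace PLB

open Finset Relation

variable {α : Type*} [Fintype α] [DecidableEq α]

open Classical in
/-- number of equivalence classes of the equivalence generated by `r`. -/
noncomputable def ncl (r : α → α → Prop) : ℕ :=
  (Finset.univ.image (fun x => Finset.univ.filter (fun y => EqvGen r x y))).card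

lemma eqvGen_congr {r r' : α → α → Prop} (h : ∀ x y, r x y ↔ r' x y) {x y : α} :
    EqvGen r x y ↔ EqvGen r' x y :=
  ⟨EqvGen.mono (fun a b hab => (h a b).1 hab) x y, EqvGen.mono (fun a b hab => (h a b).2 hab) x y⟩

lemma ncl_congr {r r' : α → α → Prop} (h : ∀ x y, r x y ↔ r' x y) : ncl r = ncl r' := by
  classical
  unfold ncl
  congr 1
  apply Finset.image_congr
  intro x _
  apply Finset.filter_congr
  intro y _
  simp [eqvGen_congr h]

open Classical in
lemma mem_cls {r : α → α → Prop} {x y : α} :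
    y ∈ Finset.univ.filter (fun z => EqvGen r x z) ↔ EqvGen r x y := by
  simp

open Classical in
lemma cls_eq_iff {r : α → α → Prop} {x y : α} :
    (Finset.univ.filter (fun z => EqvGen r x z)) = (Finset.univ.filter (fun z => EqvGen r y z))
      ↔ EqvGen r x y := by
  constructor
  · intro h
    have hx : x ∈ Finset.univ.filter (fun z => EqvGen r y z) := by
      rw [← h]; exact mem_cls.2 (EqvGen.refl x)
    exact (mem_cls.1 hx).symm
  · intro h
    ext z
    simp only [mem_cls]
    exact ⟨fun hz => (h.symm).trans _ _ _ hz, fun hz => h.trans _ _ _ hz⟩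

lemma eqvGen_false {x y : α} (h : EqvGen (fun _ _ => False) x y) : x = y := by
  induction h with
  | rel a b hab => exact absurd hab id
  | refl a => rfl
  | symm a b _ ih => exact ih.symm
  | trans a b c _ _ ih1 ih2 => exact ih1.trans ih2

lemma ncl_bot : ncl (fun (_ _ : α) => False) = Fintype.card α := by
  classical
  unfold ncl
  rw [Finset.card_image_of_injective _ ?_, Finset.card_univ]
  intro a b hab
  exact eqvGen_false (cls_eq_iff.1 (by convert hab using 2))

/-- decomposition: a chain for `r ⊔ pairs P` either avoids `P` or passes through it. -/
lemma eqvGen_pairs_decomp {r : α → α → Prop} {P : Finset α} {x y : α}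
    (h : EqvGen (fun a b => r a b ∨ (a ∈ P ∧ b ∈ P)) x y) :
    EqvGen r x y ∨ ((∃ u ∈ P, EqvGen r x u) ∧ ∃ v ∈ P, EqvGen r v y) := by
  induction h with
  | rel a b hab =>
    rcases hab with hab | ⟨ha, hb⟩
    · exact Or.inl (EqvGen.rel _ _ hab)
    · exact Or.inr ⟨⟨a, ha, EqvGen.refl a⟩, ⟨b, hb, EqvGen.refl b⟩⟩
  | refl a => exact Or.inl (EqvGen.refl a)
  | symm a b _ ih =>
    rcases ih with ih | ⟨⟨u, hu, hxu⟩, ⟨v, hv, hvy⟩⟩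
    · exact Or.inl (ih.symm _ _)
    · exact Or.inr ⟨⟨v, hv, hvy.symm _ _⟩, ⟨u, hu, hxu.symm _ _⟩⟩
  | trans a b c _ _ ih1 ih2 =>
    rcases ih1 with ih1 | ⟨h1, ⟨v, hv, hvb⟩⟩
    · rcases ih2 with ih2 | ⟨⟨u, hu, hbu⟩, h2⟩
      · exact Or.inl (ih1.trans _ _ _ ih2)
      · exact Or.inr ⟨⟨u, hu, ih1.trans _ _ _ hbu⟩, h2⟩
    · rcases ih2 with ih2 | ⟨_, h2⟩
      · exact Or.inr ⟨h1, ⟨v, hv, hvb.trans _ _ _ ih2⟩⟩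
      · exact Or.inr ⟨h1, h2⟩

/-- Adding all pairs within `P` to a relation decreases the class count by at most `|P| - 1`. -/
lemma ncl_le_pairs (r : α → α → Prop) (P : Finset α) :
    ncl r ≤ ncl (fun a b => r a b ∨ (a ∈ P ∧ b ∈ P)) + (P.card - 1) := by
  classical
  rcases P.eq_empty_or_nonempty with rfl | ⟨p0, hp0⟩
  · rw [ncl_congr (r' := fun a b => r a b ∨ (a ∈ (∅: Finset α) ∧ b ∈ (∅: Finset α))) (by simp)]
    simp
  set r' := fun a b => r a b ∨ (a ∈ P ∧ b ∈ P) with hr'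
  set cls := fun x => Finset.univ.filter (fun z => EqvGen r x z) with hcls
  set cls' := fun x => Finset.univ.filter (fun z => EqvGen r' x z) with hcls'
  set A : Finset (Finset α) := Finset.univ.image cls with hA
  set B : Finset (Finset α) := Finset.univ.image cls' with hB
  -- split A according to meeting P
  have hsplit : A.card = (A.filter (fun C => ∃ p ∈ P, p ∈ C)).card
      + (A.filter (fun C => ¬ ∃ p ∈ P, p ∈ C)).card := by
    exact (Finset.card_filter_add_card_filter_not _).symm
  -- classes meeting P are at most |P|
  have hAP : (A.filter (fun C => ∃ p ∈ P, p ∈ C)).card ≤ P.card := by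
    apply Finset.card_le_card_of_injOn (fun C => if h : ∃ p ∈ P, p ∈ C then h.choose else p0)
    · intro C hC
      simp only [Finset.coe_filter, Set.mem_setOf_eq] at hC
      dsimp only
      rw [dif_pos hC.2]
      exact hC.2.choose_spec.1
    · intro C hC D hD hCD
      simp only [Finset.coe_filter, Set.mem_setOf_eq] at hC hD
      dsimp only at hCD
      rw [dif_pos hC.2, dif_pos hD.2] at hCD
      obtain ⟨x, -, rfl⟩ := Finset.mem_image.1 hC.1
      obtain ⟨y, -, rfl⟩ := Finset.mem_image.1 hD.1
      have h1 : EqvGen r x (hC.2.choose) := mem_cls.1 hC.2.choose_spec.2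
      have h2 : EqvGen r y (hD.2.choose) := mem_cls.1 hD.2.choose_spec.2
      rw [hcls]
      refine cls_eq_iff.2 ?_
      exact (h1.trans _ _ _ (hCD ▸ h2.symm _ _))
  -- classes not meeting P inject into B, missing the class of p0
  have hA0 : (A.filter (fun C => ¬ ∃ p ∈ P, p ∈ C)).card + 1 ≤ B.card := by
    classical
    set A0 := A.filter (fun C => ¬ ∃ p ∈ P, p ∈ C) with hA0def
    -- map: class of x (for r) ↦ class of x (for r')
    have key : ∀ C ∈ A0, ∀ x, cls x = C → ∀ y, cls y = C → True := fun _ _ _ _ _ _ => trivial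
    -- use an explicit function via choice of representative
    have hrep : ∀ C ∈ A0, ∃ x, cls x = C := by
      intro C hC
      obtain ⟨x, -, hx⟩ := Finset.mem_image.1 (Finset.mem_filter.1 hC).1
      exact ⟨x, hx⟩
    choose rep hrep using hrep
    have himg : ∀ C hC, cls' (rep C hC) ∈ B := by
      intro C hC; exact Finset.mem_image.2 ⟨rep C hC, Finset.mem_univ _, rfl⟩
    -- injectivity
    have hinj : ∀ C hC D hD, cls' (rep C hC) = cls' (rep D hD) → C = D := by
      intro C hC D hD h
      have := cls_eq_iff.1 h
      rcases eqvGen_pairs_decomp this with h' | ⟨⟨u, hu, hxu⟩, -⟩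
      · rw [← hrep C hC, ← hrep D hD]; exact cls_eq_iff.2 h'
      · exfalso
        have : u ∈ C := by
          rw [← hrep C hC]; exact mem_cls.2 hxu
        exact (Finset.mem_filter.1 hC).2 ⟨u, hu, this⟩
    -- the class of p0 is not in the image
    have hp0cls : ∀ C hC, cls' (rep C hC) ≠ cls' p0 := by
      intro C hC h
      have := cls_eq_iff.1 h
      rcases eqvGen_pairs_decomp this with h' | ⟨⟨u, hu, hxu⟩, -⟩
      · have : p0 ∈ C := by rw [← hrep C hC]; exact mem_cls.2 h'
        exact (Finset.mem_filter.1 hC).2 ⟨p0, hp0, this⟩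
      · have : u ∈ C := by rw [← hrep C hC]; exact mem_cls.2 hxu
        exact (Finset.mem_filter.1 hC).2 ⟨u, hu, this⟩
    -- now count
    have : (A0.attach.image (fun C => cls' (rep C.1 C.2))) ∪ {cls' p0} ⊆ B := by
      intro C hC
      rcases Finset.mem_union.1 hC with hC | hC
      · obtain ⟨D, -, rfl⟩ := Finset.mem_image.1 hC
        exact himg _ _
      · rw [Finset.mem_singleton.1 hC]
        exact Finset.mem_image.2 ⟨p0, Finset.mem_univ _, rfl⟩
    calc A0.card + 1 = (A0.attach.image (fun C => cls' (rep C.1 C.2))).card + 1 := by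
          rw [Finset.card_image_of_injOn, Finset.card_attach]
          intro C _ D _ h
          exact Subtype.ext (hinj C.1 C.2 D.1 D.2 h)
      _ = ((A0.attach.image (fun C => cls' (rep C.1 C.2))) ∪ {cls' p0}).card := by
          rw [Finset.card_union_of_disjoint, Finset.card_singleton]
          simp only [Finset.disjoint_singleton_right, Finset.mem_image]
          rintro ⟨C, -, h⟩
          exact hp0cls C.1 C.2 h
      _ ≤ B.card := Finset.card_le_card this
  have hPpos : 1 ≤ P.card := Finset.card_pos.2 ⟨p0, hp0⟩
  have e1 : ncl r = A.card := rfl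
  have e2 : ncl r' = B.card := rfl
  show ncl r ≤ ncl r' + (P.card - 1)
  omega

end PLB

open PluralityGame

namespace PLB

open Finset

variable {n : ℕ}

/-- length of a history -/
lemma history_length (s : Strategy n) (c : Fin n → Fin 3) (t : ℕ) :
    (history s c t).length = t := by
  induction t with
  | zero => rfl
  | succ t ih => simp [history, ih]

/-- the t-th answer in a history -/
lemma history_getElem (s : Strategy n) (c : Fin n → Fin 3) {t T : ℕ} (h : t < T) :
    (history s c T)[t]'(by rw [history_length]; exact h)
      = answer c (s (history s c t)) := by
  induction T with
  | zero => omega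
  | succ T ih =>
    simp only [history]
    rcases Nat.lt_succ_iff_lt_or_eq.1 h with h' | rfl
    · rw [List.getElem_append_left (by simpa [history_length] using h')]
      exact ih h'
    · rw [List.getElem_append_right (by simp [history_length])]
      simp [history_length]

/-- membership in an answer -/
lemma mem_answer {c : Fin n → Fin 3} {q : Finset (Fin n)} {x y : Fin n} :
    (x, y) ∈ answer c q ↔ (x ∈ q ∧ y ∈ q) ∧ c x = c y := by
  simp [answer, Finset.mem_filter, Finset.mem_product]

/-- a coloring with the same color-partition has the same plurality balls -/
lemma plurality_transfer {c c' : Fin n → Fin 3}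
    (h : ∀ x y, c' x = c' y ↔ c x = c y) {b : Fin n}
    (hb : IsPlurality c b) : IsPlurality c' b := by
  intro j hj
  have hcnt : ∀ z : Fin n, (Finset.univ.filter fun x => c' x = c' z).card
      = (Finset.univ.filter fun x => c x = c z).card := by
    intro z
    congr 1
    apply Finset.filter_congr
    intro x _
    exact h x z
  by_cases hz : ∃ z, c' z = j
  · obtain ⟨z, rfl⟩ := hz
    have hne : c z ≠ c b := fun hzb => hj ((h z b).2 hzb)
    calc (Finset.univ.filter fun x => c' x = c' z).card
        = (Finset.univ.filter fun x => c x = c z).card := hcnt z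
      _ < (Finset.univ.filter fun x => c x = c b).card := hb (c z) hne
      _ = (Finset.univ.filter fun x => c' x = c' b).card := (hcnt b).symm
  · push_neg at hz
    have h0 : (Finset.univ.filter fun x => c' x = j).card = 0 := by
      rw [Finset.card_eq_zero]
      ext x
      simp only [Finset.mem_filter, Finset.mem_univ, true_and, Finset.notMem_empty, iff_false]
      exact hz x
    rw [h0]
    rw [(hcnt b)]
    have : b ∈ Finset.univ.filter fun x => c x = c b := by simp
    exact Finset.card_pos.2 ⟨b, this⟩

section Upper

variable (n k : ℕ)

lemma exists_qdef (hkn : k ≤ n) : ∃ q ⊆ (Finset.univ : Finset (Fin n)), q.card = k :=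
  Finset.exists_subset_card_eq (by simpa using hkn)

/-- a default query of size k -/
noncomputable def qdef (hkn : k ≤ n) : Finset (Fin n) :=
  (exists_qdef n k hkn).choose

lemma qdef_card (hkn : k ≤ n) : (qdef n k hkn).card = k :=
  (exists_qdef n k hkn).choose_spec.2

/-- the list of all k-element subsets -/
noncomputable def allQ : List (Finset (Fin n)) :=
  ((Finset.univ : Finset (Fin n)).powersetCard k).toList

/-- the exhaustive strategy -/
noncomputable def bigS (hkn : k ≤ n) : Strategy n :=
  fun h => (allQ n k).getD h.length (qdef n k hkn)

lemma bigS_valid (hkn : k ≤ n) : (bigS n k hkn).Valid k := by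
  intro h
  unfold bigS
  rcases lt_or_ge h.length (allQ n k).length with hl | hl
  · rw [List.getD_eq_getElem _ _ hl]
    have h2 : (allQ n k)[h.length] ∈ ((Finset.univ : Finset (Fin n)).powersetCard k).toList :=
      List.getElem_mem _
    rw [Finset.mem_toList, Finset.mem_powersetCard] at h2
    exact h2.2
  · rw [List.getD_eq_default _ _ hl]
    exact qdef_card n k hkn

lemma bigS_solves (hk : 2 ≤ k) (hkn : k ≤ n) :
    SolvesPlurality (bigS n k hkn) (allQ n k).length := by
  have hquery : ∀ (c : Fin n → Fin 3) (t : ℕ),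
      bigS n k hkn (history (bigS n k hkn) c t) = (allQ n k).getD t (qdef n k hkn) := by
    intro c t
    unfold bigS
    rw [history_length]
  -- consistency implies same partition
  have hpart : ∀ c c', Consistent (bigS n k hkn) c c' (allQ n k).length →
      ∀ x y, c' x = c' y ↔ c x = c y := by
    intro c c' hcons x y
    by_cases hxy : x = y
    · subst hxy; simp
    -- find a query containing both
    obtain ⟨q, hq1, -, hq2⟩ := Finset.exists_subsuperset_card_eq
      (s := ({x, y} : Finset (Fin n))) (t := (Finset.univ : Finset (Fin n)))
      (Finset.subset_univ _)
      (le_trans (Finset.card_insert_le _ _) (by simpa using hk))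
      (by simpa using hkn)
    have hqmem : q ∈ allQ n k := by
      have hiff : q ∈ allQ n k ↔
          q ∈ ((Finset.univ : Finset (Fin n)).powersetCard k).toList := Iff.rfl
      rw [hiff, Finset.mem_toList, Finset.mem_powersetCard]
      exact ⟨Finset.subset_univ _, hq2⟩
    obtain ⟨⟨t, ht⟩, rfl⟩ := List.mem_iff_get.1 hqmem
    have hxq : x ∈ (allQ n k).get ⟨t, ht⟩ := hq1 (by simp)
    have hyq : y ∈ (allQ n k).get ⟨t, ht⟩ := hq1 (by simp [Finset.mem_insert])
    -- extract equality of the t-th answers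
    have hans : answer c' (bigS n k hkn (history (bigS n k hkn) c' t))
        = answer c (bigS n k hkn (history (bigS n k hkn) c t)) := by
      have h1 := history_getElem (bigS n k hkn) c' (h := ht)
      have h2 := history_getElem (bigS n k hkn) c (h := ht)
      rw [← h1, ← h2]
      exact List.getElem_of_eq hcons _
    rw [hquery c', hquery c] at hans
    have hQ : (allQ n k).getD t (qdef n k hkn) = (allQ n k).get ⟨t, ht⟩ := by
      exact List.getD_eq_getElem _ _ ht
    rw [hQ] at hans
    constructor
    · intro h
      have : (x, y) ∈ answer c' ((allQ n k).get ⟨t, ht⟩) := mem_answer.2 ⟨⟨hxq, hyq⟩, h⟩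
      rw [hans] at this
      exact (mem_answer.1 this).2
    · intro h
      have : (x, y) ∈ answer c ((allQ n k).get ⟨t, ht⟩) := mem_answer.2 ⟨⟨hxq, hyq⟩, h⟩
      rw [← hans] at this
      exact (mem_answer.1 this).2
  intro c
  by_cases hp : ∃ b, IsPlurality c b
  · obtain ⟨b, hb⟩ := hp
    left
    exact ⟨b, fun c' hc' => plurality_transfer (hpart c c' hc') hb⟩
  · right
    intro c' hc' b hb
    exact hp ⟨b, plurality_transfer (fun x y => (hpart c c' hc' x y).symm) hb⟩

end Upper

end PLB

namespace PLB

open Finset PluralityGame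

variable {n : ℕ}

/-- number of balls of color j -/
def cnt (j : Fin 3) (χ : Fin n → Fin 3) : ℕ := (Finset.univ.filter (fun x => χ x = j)).card

/-- swap colors 0 and 1 -/
def flp : Fin 3 → Fin 3 := fun j => if j = 0 then 1 else if j = 1 then 0 else 2

lemma fin3_cases (j : Fin 3) : j = 0 ∨ j = 1 ∨ j = 2 := by omega

lemma cnt_partition (χ : Fin n → Fin 3) : cnt 0 χ + cnt 1 χ + cnt 2 χ = n := by
  classical
  have h := Finset.card_eq_sum_card_fiberwise
    (f := χ) (s := (Finset.univ : Finset (Fin n))) (t := (Finset.univ : Finset (Fin 3)))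
    (fun x _ => Finset.mem_univ _)
  rw [Finset.card_univ, Fintype.card_fin] at h
  rw [Fin.sum_univ_three] at h
  exact h.symm

/-- update a set of balls to a color -/
def upd (χ : Fin n → Fin 3) (A : Finset (Fin n)) (v : Fin 3) : Fin n → Fin 3 :=
  fun x => if x ∈ A then v else χ x

lemma cnt_upd (χ : Fin n → Fin 3) (A : Finset (Fin n)) (v j : Fin 3)
    (hA : ∀ x ∈ A, χ x = 2) (hv : v ≠ 2) (hj : j ≠ 2) :
    cnt j (upd χ A v) = cnt j χ + (if j = v then A.card else 0) := by
  classical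
  by_cases hjv : j = v
  · subst hjv
    simp only [if_pos rfl]
    have hset : Finset.univ.filter (fun x => upd χ A j x = j)
        = Finset.univ.filter (fun x => χ x = j) ∪ A := by
      ext x
      by_cases hxA : x ∈ A
      · simp [upd, hxA]
      · simp [upd, hxA]
    rw [cnt, hset, Finset.card_union_of_disjoint]
    · rfl
    · rw [Finset.disjoint_left]
      intro x hx hxA
      have := hA x hxA
      simp only [Finset.mem_filter] at hx
      rw [hx.2] at this
      exact hj this
  · simp only [if_neg hjv]
    have hset : Finset.univ.filter (fun x => upd χ A v x = j)
        = Finset.univ.filter (fun x => χ x = j) := by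
      ext x
      by_cases hxA : x ∈ A
      · simp only [Finset.mem_filter, Finset.mem_univ, true_and]
        simp only [upd, if_pos hxA]
        constructor
        · intro h; exact absurd h.symm hjv
        · intro h; rw [hA x hxA] at h; exact absurd h.symm hj
      · simp only [Finset.mem_filter, Finset.mem_univ, true_and]; simp [upd, hxA]
    rw [cnt, hset, Nat.add_zero]
    rfl

lemma upd_of_not_mem (χ : Fin n → Fin 3) (A : Finset (Fin n)) (v : Fin 3) {x : Fin n}
    (h : x ∉ A) : upd χ A v x = χ x := if_neg h

lemma upd_of_mem (χ : Fin n → Fin 3) (A : Finset (Fin n)) (v : Fin 3) {x : Fin n}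
    (h : x ∈ A) : upd χ A v x = v := if_pos h

section SpecSec

variable (N : ℕ)

/-- Specification of a legal adversary answer-state after a query. -/
def Spec (χ : Fin n → Fin 3) (q : Finset (Fin n)) (χ' : Fin n → Fin 3) : Prop :=
  (∀ x, ¬(x ∈ q ∧ χ x = 2) → χ' x = χ x) ∧
  (∀ x ∈ q, χ' x ≠ 2) ∧
  (cnt 0 χ' ≤ N ∧ cnt 1 χ' ≤ N) ∧
  ((∃ x ∈ q, χ x = 2) → (∀ x ∈ q, ∀ y ∈ q, χ' x = χ' y) →
      ∀ x ∈ q, cnt (flp (χ' x)) χ' = N)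

/-- the one-sided construction -/
lemma exists_spec_mono {k : ℕ} (a b : Fin 3) (ha : a ≠ 2) (hb : b ≠ 2) (hab : a ≠ b)
    (χ : Fin n → Fin 3) (q : Finset (Fin n)) (hq : q.card = k) (hk : 2 ≤ k)
    (hn : n = N + N)
    (hca : cnt a χ ≤ N) (hcb : cnt b χ ≤ N)
    (hold : ∀ x ∈ q, χ x ≠ b) (hFne : (q.filter (fun x => χ x = 2)).Nonempty) :
    ∃ χ', (∀ x, ¬(x ∈ q ∧ χ x = 2) → χ' x = χ x) ∧
      (∀ x ∈ q, χ' x ≠ 2) ∧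
      (cnt a χ' ≤ N ∧ cnt b χ' ≤ N) ∧
      ((∀ x ∈ q, ∀ y ∈ q, χ' x = χ' y) → ∀ x ∈ q, cnt (flp (χ' x)) χ' = N) := by
  classical
  have hflpa : flp a = b ∧ flp b = a := by
    rcases fin3_cases a with rfl | rfl | rfl <;> rcases fin3_cases b with rfl | rfl | rfl <;>
      simp_all [flp]
  set F := q.filter (fun x => χ x = 2) with hF
  have hFq : F ⊆ q := Finset.filter_subset _ _
  have hFfresh : ∀ x ∈ F, χ x = 2 := fun x hx => (Finset.mem_filter.1 hx).2
  set f := F.card with hf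
  have hf1 : 1 ≤ f := Finset.card_pos.2 hFne
  have hfc2 : f ≤ cnt 2 χ := Finset.card_le_card (fun x hx => by
    simp only [cnt, Finset.mem_filter, Finset.mem_univ, true_and]
    exact hFfresh x hx)
  have hpartition := cnt_partition χ
  have hpart : cnt a χ + cnt b χ + cnt 2 χ = n := by
    rcases fin3_cases a with rfl | rfl | rfl <;> rcases fin3_cases b with rfl | rfl | rfl <;>
      first
        | omega
        | (exact absurd rfl ha)
        | (exact absurd rfl hb)
        | (exact absurd rfl hab)
  have hcap : f + cnt a χ + cnt b χ ≤ N + N := by omega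
  by_cases hr1 : cnt b χ = N
  · -- the b side is full: all fresh balls get color a
    refine ⟨upd χ F a, ?_, ?_, ?_, ?_⟩
    · intro x hx
      apply upd_of_not_mem
      intro hxF
      exact hx ⟨hFq hxF, hFfresh x hxF⟩
    · intro x hx
      by_cases hxF : x ∈ F
      · rw [upd_of_mem _ _ _ hxF]; exact ha
      · rw [upd_of_not_mem _ _ _ hxF]
        intro h2
        exact hxF (Finset.mem_filter.2 ⟨hx, h2⟩)
    · constructor
      · rw [cnt_upd χ F a a hFfresh ha ha, if_pos rfl]
        omega
      · rw [cnt_upd χ F a b hFfresh ha hb, if_neg (Ne.symm hab)]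
        omega
    · intro hmono x hx
      have hxa : upd χ F a x = a := by
        by_cases hxF : x ∈ F
        · exact upd_of_mem _ _ _ hxF
        · rw [upd_of_not_mem _ _ _ hxF]
          have h2 : χ x ≠ 2 := fun h2 => hxF (Finset.mem_filter.2 ⟨hx, h2⟩)
          have hbx : χ x ≠ b := hold x hx
          rcases fin3_cases (χ x) with h | h | h <;>
            rcases fin3_cases a with rfl | rfl | rfl <;>
            rcases fin3_cases b with rfl | rfl | rfl <;> simp_all
      rw [hxa, hflpa.1]
      rw [cnt_upd χ F a b hFfresh ha hb, if_neg (Ne.symm hab)]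
      omega
  · -- r_b ≥ 1 : send y = max (f - (N - cnt a χ)) 1 fresh balls to b, the rest to a
    have hrb : cnt b χ < N := lt_of_le_of_ne hcb hr1
    set y := max (f - (N - cnt a χ)) 1 with hy
    have hyf : y ≤ f := by omega
    have hyb : cnt b χ + y ≤ N := by omega
    obtain ⟨F1, hF1sub, hF1card⟩ := Finset.exists_subset_card_eq hyf
    set F0 := F \ F1 with hF0
    have hF0card : F0.card = f - y := by
      rw [hF0, Finset.card_sdiff_of_subset hF1sub, hF1card]
    have hF0a : cnt a χ + F0.card ≤ N := by
      rw [hF0card]; omega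
    have hF1fresh : ∀ x ∈ F1, χ x = 2 := fun x hx => hFfresh x (hF1sub hx)
    have hF0fresh : ∀ x ∈ F0, upd χ F1 b x = 2 := by
      intro x hx
      rw [upd_of_not_mem _ _ _ (Finset.mem_sdiff.1 hx).2]
      exact hFfresh x (Finset.mem_sdiff.1 hx).1
    set χ' := upd (upd χ F1 b) F0 a with hχ'
    have hval : ∀ x, χ' x = if x ∈ F0 then a else if x ∈ F1 then b else χ x := by
      intro x
      rw [hχ', upd, upd]
    have hcnta : cnt a χ' = cnt a χ + F0.card := by
      rw [hχ', cnt_upd _ F0 a a hF0fresh ha ha, if_pos rfl,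
        cnt_upd χ F1 b a hF1fresh hb ha, if_neg hab]
      omega
    have hcntb : cnt b χ' = cnt b χ + y := by
      rw [hχ', cnt_upd _ F0 a b hF0fresh ha hb, if_neg (Ne.symm hab),
        cnt_upd χ F1 b b hF1fresh hb hb, if_pos rfl, hF1card]
      omega
    refine ⟨χ', ?_, ?_, ?_, ?_⟩
    · intro x hx
      rw [hval]
      have hxF : x ∉ F := fun hxF => hx ⟨hFq hxF, hFfresh x hxF⟩
      rw [if_neg (fun h => hxF ((Finset.sdiff_subset) h)), if_neg (fun h => hxF (hF1sub h))]
    · intro x hx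
      rw [hval]
      by_cases h0 : x ∈ F0
      · simp [h0, ha]
      · by_cases h1 : x ∈ F1
        · simp [h0, h1, hb]
        · simp only [if_neg h0, if_neg h1]
          intro h2
          have hxF : x ∈ F := Finset.mem_filter.2 ⟨hx, h2⟩
          rcases Finset.mem_sdiff.2 ⟨hxF, h1⟩ with h
          exact h0 h
    · exact ⟨by omega, by omega⟩
    · -- mono case analysis
      intro hmono x hx
      -- there is a ball of color b in the query
      have hy1 : 1 ≤ y := le_max_right _ _
      obtain ⟨z1, hz1⟩ := Finset.card_pos.1 (hF1card ▸ hy1)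
      have hz1q : z1 ∈ q := hFq (hF1sub hz1)
      have hz1b : χ' z1 = b := by
        rw [hval, if_neg (fun h => (Finset.mem_sdiff.1 h).2 hz1), if_pos hz1]
      -- so by mono everything in q has color b
      have hallb : ∀ w ∈ q, χ' w = b := fun w hw => (hmono w hw z1 hz1q).trans hz1b
      -- old balls must have color a or be fresh; colored ones contradict
      have hqF : ∀ w ∈ q, w ∈ F := by
        intro w hw
        by_contra hwF
        have h2 : χ w ≠ 2 := fun h2 => hwF (Finset.mem_filter.2 ⟨hw, h2⟩)
        have hwb : χ' w = χ w := by
          rw [hval, if_neg (fun h => hwF (Finset.sdiff_subset h)),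
            if_neg (fun h => hwF (hF1sub h))]
        have := hallb w hw
        rw [hwb] at this
        exact hold w hw this
      -- also F0 must be empty
      have hF0empty : F0.card = 0 := by
        by_contra hne
        obtain ⟨z0, hz0⟩ := Finset.card_pos.1 (Nat.pos_of_ne_zero hne)
        have hz0q : z0 ∈ q := hFq (Finset.sdiff_subset hz0)
        have : χ' z0 = a := by rw [hval, if_pos hz0]
        rw [hallb z0 hz0q] at this
        exact hab this.symm
      -- q = F, so f = k ≥ 2, hence y = f requires N = cnt a χ
      have hqF' : q = F := Finset.Subset.antisymm (fun w hw => hqF w hw) hFq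
      have hfk : f = k := by rw [hf, ← hqF', hq]
      have hyf' : y = f := by
        rw [hF0card] at hF0empty
        omega
      have hNa : N = cnt a χ := by
        have : f - (N - cnt a χ) = f ∨ y = 1 := by
          rcases max_cases (f - (N - cnt a χ)) 1 with ⟨h1, h2⟩ | ⟨h1, h2⟩ <;> omega
        rcases this with h | h
        · omega
        · omega
      rw [hallb x hx, hflpa.2, hcnta, hF0empty]
      omega

/-- Existence of a legal adversary answer. -/
lemma exists_spec {k : ℕ} (hn : n = N + N) (hk : 2 ≤ k)
    (χ : Fin n → Fin 3) (q : Finset (Fin n))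
    (h0 : cnt 0 χ ≤ N) (h1 : cnt 1 χ ≤ N) (hq : q.card = k) :
    ∃ χ', Spec N χ q χ' := by
  classical
  rcases Finset.eq_empty_or_nonempty (q.filter (fun x => χ x = 2)) with hF | hFne
  · refine ⟨χ, fun x _ => rfl, ?_, ⟨h0, h1⟩, ?_⟩
    · intro x hx h2
      have : x ∈ q.filter (fun x => χ x = 2) := Finset.mem_filter.2 ⟨hx, h2⟩
      rw [hF] at this
      exact absurd this (Finset.notMem_empty x)
    · rintro ⟨x, hx, h2⟩
      have : x ∈ q.filter (fun x => χ x = 2) := Finset.mem_filter.2 ⟨hx, h2⟩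
      rw [hF] at this
      exact absurd this (Finset.notMem_empty x)
  · by_cases hb1 : ∀ x ∈ q, χ x ≠ 1
    · obtain ⟨χ', hA, hB, ⟨hc1, hc2⟩, hD⟩ :=
        exists_spec_mono N 0 1 (by decide) (by decide) (by decide) χ q hq hk hn h0 h1 hb1 hFne
      exact ⟨χ', hA, hB, ⟨hc1, hc2⟩, fun _ hmono => hD hmono⟩
    · by_cases hb0 : ∀ x ∈ q, χ x ≠ 0
      · obtain ⟨χ', hA, hB, ⟨hc1, hc2⟩, hD⟩ :=
          exists_spec_mono N 1 0 (by decide) (by decide) (by decide) χ q hq hk hn h1 h0 hb0 hFne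
        exact ⟨χ', hA, hB, ⟨hc2, hc1⟩, fun _ hmono => hD hmono⟩
      · -- bichromatic old part: no mono obligations
        push_neg at hb1 hb0
        obtain ⟨x1, hx1q, hx1⟩ := hb1
        obtain ⟨x0, hx0q, hx0⟩ := hb0
        set F := q.filter (fun x => χ x = 2) with hF
        have hFq : F ⊆ q := Finset.filter_subset _ _
        have hFfresh : ∀ x ∈ F, χ x = 2 := fun x hx => (Finset.mem_filter.1 hx).2
        set f := F.card with hf
        have hfc2 : f ≤ cnt 2 χ := Finset.card_le_card (fun x hx => by
          simp only [cnt, Finset.mem_filter, Finset.mem_univ, true_and]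
          exact hFfresh x hx)
        have hpart := cnt_partition χ
        set y := min (N - cnt 1 χ) f with hy
        have hyf : y ≤ f := min_le_right _ _
        obtain ⟨F1, hF1sub, hF1card⟩ := Finset.exists_subset_card_eq hyf
        set F0 := F \ F1 with hF0
        have hF0card : F0.card = f - y := by rw [hF0, Finset.card_sdiff_of_subset hF1sub, hF1card]
        have hF1fresh : ∀ x ∈ F1, χ x = 2 := fun x hx => hFfresh x (hF1sub hx)
        have hF0fresh : ∀ x ∈ F0, upd χ F1 1 x = 2 := by
          intro x hx
          rw [upd_of_not_mem _ _ _ (Finset.mem_sdiff.1 hx).2]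
          exact hFfresh x (Finset.mem_sdiff.1 hx).1
        set χ' := upd (upd χ F1 1) F0 0 with hχ'
        have hval : ∀ x, χ' x = if x ∈ F0 then 0 else if x ∈ F1 then 1 else χ x := by
          intro x
          rw [hχ', upd, upd]
        have hcnta : cnt 0 χ' = cnt 0 χ + F0.card := by
          rw [hχ', cnt_upd _ F0 0 0 hF0fresh (by decide) (by decide), if_pos rfl,
            cnt_upd χ F1 1 0 hF1fresh (by decide) (by decide), if_neg (by decide)]
          omega
        have hcntb : cnt 1 χ' = cnt 1 χ + y := by
          rw [hχ', cnt_upd _ F0 0 1 hF0fresh (by decide) (by decide), if_neg (by decide),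
            cnt_upd χ F1 1 1 hF1fresh (by decide) (by decide), if_pos rfl, hF1card]
          omega
        refine ⟨χ', ?_, ?_, ⟨by omega, by omega⟩, ?_⟩
        · intro x hx
          rw [hval]
          have hxF : x ∉ F := fun hxF => hx ⟨hFq hxF, hFfresh x hxF⟩
          rw [if_neg (fun h => hxF (Finset.sdiff_subset h)), if_neg (fun h => hxF (hF1sub h))]
        · intro x hx
          rw [hval]
          by_cases h0' : x ∈ F0
          · simp [h0']
          · by_cases h1' : x ∈ F1
            · simp [h0', h1']
            · simp only [if_neg h0', if_neg h1']
              intro h2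
              exact h0' (Finset.mem_sdiff.2 ⟨Finset.mem_filter.2 ⟨hx, h2⟩, h1'⟩)
        · -- mono impossible
          intro _ hmono
          exfalso
          have hx0' : χ' x0 = 0 := by
            rw [hval, if_neg, if_neg]
            · exact hx0
            · intro h; rw [hFfresh x0 (hF1sub h)] at hx0; exact absurd hx0 (by decide)
            · intro h
              rw [hFfresh x0 (Finset.sdiff_subset h)] at hx0; exact absurd hx0 (by decide)
          have hx1' : χ' x1 = 1 := by
            rw [hval, if_neg, if_neg]
            · exact hx1
            · intro h; rw [hFfresh x1 (hF1sub h)] at hx1; exact absurd hx1 (by decide)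
            · intro h
              rw [hFfresh x1 (Finset.sdiff_subset h)] at hx1; exact absurd hx1 (by decide)
          have := hmono x0 hx0q x1 hx1q
          rw [hx0', hx1'] at this
          exact absurd this (by decide)

end SpecSec

end PLB

namespace PLB

open Finset PluralityGame

variable {n : ℕ}

section Game

variable (s : Strategy n) (N : ℕ)

open Classical in
noncomputable def step (χ : Fin n → Fin 3) (q : Finset (Fin n)) : Fin n → Fin 3 :=
  if h : ∃ χ', Spec N χ q χ' then h.choose else χ

lemma step_spec {χ : Fin n → Fin 3} {q : Finset (Fin n)} (h : ∃ χ', Spec N χ q χ') :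
    Spec N χ q (step N χ q) := by
  rw [step, dif_pos h]
  exact h.choose_spec

noncomputable def game : ℕ → ((Fin n → Fin 3) × List (Finset (Fin n × Fin n)))
  | 0 => (fun _ => 2, [])
  | (t+1) =>
      let p := game t
      let q := s p.2
      let χ' := step N p.1 q
      (χ', p.2 ++ [answer χ' q])

lemma game_succ_fst (t : ℕ) :
    (game s N (t+1)).1 = step N (game s N t).1 (s (game s N t).2) := rfl

lemma game_succ_snd (t : ℕ) :
    (game s N (t+1)).2 = (game s N t).2 ++ [answer ((game s N (t+1)).1) (s (game s N t).2)] := rfl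

lemma game_hist_length (t : ℕ) : (game s N t).2.length = t := by
  induction t with
  | zero => rfl
  | succ t ih => rw [game_succ_snd]; simp [ih]

variable {k : ℕ}

lemma caps_all (hval : s.Valid k) (hk : 2 ≤ k) (hn : n = N + N) :
    ∀ t, cnt 0 ((game s N t).1) ≤ N ∧ cnt 1 ((game s N t).1) ≤ N := by
  intro t
  induction t with
  | zero =>
    constructor <;>
    · show cnt _ (fun _ => (2 : Fin 3)) ≤ N
      simp [cnt]
  | succ t ih =>
    have hex := exists_spec N hn hk ((game s N t).1) (s (game s N t).2) ih.1 ih.2 (hval _)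
    have hspec := step_spec N hex
    rw [← game_succ_fst] at hspec
    exact hspec.2.2.1

lemma spec_all (hval : s.Valid k) (hk : 2 ≤ k) (hn : n = N + N) (t : ℕ) :
    Spec N ((game s N t).1) (s (game s N t).2) ((game s N (t+1)).1) := by
  have ih := caps_all s N hval hk hn t
  have hex := exists_spec N hn hk ((game s N t).1) (s (game s N t).2) ih.1 ih.2 (hval _)
  have hspec := step_spec N hex
  rw [← game_succ_fst] at hspec
  exact hspec

lemma chi_mono (hval : s.Valid k) (hk : 2 ≤ k) (hn : n = N + N) :
    ∀ {t t' : ℕ}, t ≤ t' → ∀ {x}, (game s N t).1 x ≠ 2 →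
      (game s N t').1 x = (game s N t).1 x := by
  intro t t' h
  induction t' , h using Nat.le_induction with
  | base => intro x _; rfl
  | succ t' ht' ih =>
    intro x hx
    have hih := ih hx
    have hspec := spec_all s N hval hk hn t'
    rw [← hih]
    apply hspec.1
    rintro ⟨-, h2⟩
    rw [hih] at h2
    exact hx h2

lemma q_colored (hval : s.Valid k) (hk : 2 ≤ k) (hn : n = N + N) {t : ℕ} {x : Fin n}
    (hx : x ∈ s (game s N t).2) : (game s N (t+1)).1 x ≠ 2 :=
  (spec_all s N hval hk hn t).2.1 x hx

lemma q_colored_final (hval : s.Valid k) (hk : 2 ≤ k) (hn : n = N + N) {t m : ℕ}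
    (htm : t < m) {x : Fin n} (hx : x ∈ s (game s N t).2) :
    (game s N m).1 x = (game s N (t+1)).1 x ∧ (game s N m).1 x ≠ 2 := by
  have h1 := q_colored s N hval hk hn hx
  have h2 := chi_mono s N hval hk hn htm h1
  exact ⟨h2, by rw [h2]; exact h1⟩

/-- The core consistency lemma: any coloring that induces the same color-equalities
on every asked query reproduces the whole transcript. -/
lemma hist_eq_of_compat (hval : s.Valid k) (hk : 2 ≤ k) (hn : n = N + N) (m : ℕ)
    (w : Fin n → Fin 3)
    (hw : ∀ t < m, ∀ x ∈ s (game s N t).2, ∀ y ∈ s (game s N t).2,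
        (w x = w y ↔ (game s N m).1 x = (game s N m).1 y)) :
    ∀ t ≤ m, history s w t = (game s N t).2 := by
  intro t
  induction t with
  | zero => intro _; rfl
  | succ t ih =>
    intro htm
    have ih' := ih (by omega)
    show history s w t ++ [answer w (s (history s w t))] = _
    rw [game_succ_snd, ih']
    congr 1
    rw [List.cons_eq_cons]
    refine ⟨?_, rfl⟩
    unfold answer
    apply Finset.filter_congr
    intro p hp
    rw [Finset.mem_product] at hp
    have h1 := q_colored_final s N hval hk hn htm hp.1
    have h2 := q_colored_final s N hval hk hn htm hp.2
    rw [hw t htm p.1 hp.1 p.2 hp.2, h1.1, h2.1]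

lemma consistent_of_compat (hval : s.Valid k) (hk : 2 ≤ k) (hn : n = N + N) (m : ℕ)
    (w : Fin n → Fin 3)
    (hw : ∀ t < m, ∀ x ∈ s (game s N t).2, ∀ y ∈ s (game s N t).2,
        (w x = w y ↔ (game s N m).1 x = (game s N m).1 y)) :
    Consistent s ((game s N m).1) w m := by
  unfold Consistent
  rw [hist_eq_of_compat s N hval hk hn m w hw m le_rfl,
    hist_eq_of_compat s N hval hk hn m ((game s N m).1) (fun _ _ _ _ _ _ => Iff.rfl) m le_rfl]

lemma consistent_of_agree (hval : s.Valid k) (hk : 2 ≤ k) (hn : n = N + N) (m : ℕ)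
    (w : Fin n → Fin 3)
    (hagree : ∀ x, (game s N m).1 x ≠ 2 → w x = (game s N m).1 x) :
    Consistent s ((game s N m).1) w m := by
  apply consistent_of_compat s N hval hk hn m w
  intro t htm x hx y hy
  have h1 := q_colored_final s N hval hk hn htm hx
  have h2 := q_colored_final s N hval hk hn htm hy
  rw [hagree x h1.2, hagree y h2.2]

end Game

end PLB

namespace PLB

open Finset PluralityGame Relation

variable {n : ℕ}

/-- fill all fresh balls with color v -/
def fill (χ : Fin n → Fin 3) (v : Fin 3) : Fin n → Fin 3 :=
  fun x => if χ x = 2 then v else χ x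

lemma fill_agree (χ : Fin n → Fin 3) (v : Fin 3) {x : Fin n} (h : χ x ≠ 2) :
    fill χ v x = χ x := if_neg h

lemma cnt_fill_self (χ : Fin n → Fin 3) {v : Fin 3} (hv : v ≠ 2) :
    cnt v (fill χ v) = cnt v χ + cnt 2 χ := by
  classical
  have hset : Finset.univ.filter (fun x => fill χ v x = v)
      = Finset.univ.filter (fun x => χ x = v) ∪ Finset.univ.filter (fun x => χ x = 2) := by
    ext x
    by_cases h : χ x = 2 <;> simp [fill, h]
  rw [cnt, hset, Finset.card_union_of_disjoint]
  · rfl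
  · rw [Finset.disjoint_left]
    intro x hx hx2
    simp only [Finset.mem_filter] at hx hx2
    rw [hx.2] at hx2
    exact hv hx2.2

lemma cnt_fill_other (χ : Fin n → Fin 3) {v j : Fin 3} (hj : j ≠ v) (hj2 : j ≠ 2) :
    cnt j (fill χ v) = cnt j χ := by
  classical
  show (Finset.univ.filter (fun x => fill χ v x = j)).card
      = (Finset.univ.filter (fun x => χ x = j)).card
  congr 1
  ext x
  simp only [Finset.mem_filter, Finset.mem_univ, true_and]
  by_cases h : χ x = 2
  · rw [show fill χ v x = v from if_pos h]
    constructor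
    · intro hv; exact absurd hv.symm hj
    · intro hx; rw [h] at hx; exact absurd hx.symm hj2
  · rw [fill_agree χ v h]

lemma cnt_fill_two (χ : Fin n → Fin 3) {v : Fin 3} (hv : v ≠ 2) :
    cnt 2 (fill χ v) = 0 := by
  classical
  rw [cnt, Finset.card_eq_zero, Finset.filter_eq_empty_iff]
  intro x _
  by_cases h : χ x = 2
  · rw [show fill χ v x = v from if_pos h]; exact hv
  · rw [fill_agree χ v h]; exact h

lemma cnt_upd_two (χ : Fin n → Fin 3) (A : Finset (Fin n)) {v : Fin 3}
    (hA : ∀ x ∈ A, χ x = 2) (hv : v ≠ 2) :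
    cnt 2 (upd χ A v) = cnt 2 χ - A.card := by
  classical
  have hset : Finset.univ.filter (fun x => upd χ A v x = 2)
      = Finset.univ.filter (fun x => χ x = 2) \ A := by
    ext x
    by_cases h : x ∈ A
    · simp only [Finset.mem_filter, Finset.mem_univ, true_and, Finset.mem_sdiff]; simp [upd, h, hv, hA x h]
    · simp only [Finset.mem_filter, Finset.mem_univ, true_and, Finset.mem_sdiff]; simp [upd, h]
  rw [cnt, hset, Finset.card_sdiff_of_subset]
  · rfl
  · intro x hx
    simp only [Finset.mem_filter, Finset.mem_univ, true_and]
    exact hA x hx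

section Witness

variable (s : Strategy n) (N : ℕ) {k : ℕ}

/-- Witnesses: for every ball b some consistent coloring in which b is not a plurality ball. -/
lemma W1 (hval : s.Valid k) (hk : 2 ≤ k) (hn : n = N + N) (m : ℕ) (b : Fin n) :
    ∃ w, Consistent s ((game s N m).1) w m ∧ ¬ IsPlurality w b := by
  classical
  set χ := (game s N m).1 with hχ
  have hcaps := caps_all s N hval hk hn m
  have hpart := cnt_partition χ
  set c0 := cnt 0 χ
  set c1 := cnt 1 χ
  set c2 := cnt 2 χ
  rcases fin3_cases (χ b) with hb | hb | hb
  · -- b is colored 0 : fill fresh with 1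
    refine ⟨fill χ 1, consistent_of_agree s N hval hk hn m _ (fun x hx => fill_agree χ 1 hx), ?_⟩
    intro hP
    have hwb : fill χ 1 b = 0 := by rw [fill_agree χ 1 (by rw [hb]; decide), hb]
    have := hP 1 (by rw [hwb]; decide)
    rw [hwb] at this
    have e1 : (Finset.univ.filter fun x => fill χ 1 x = 1).card = c1 + c2 :=
      cnt_fill_self χ (by decide)
    have e0 : (Finset.univ.filter fun x => fill χ 1 x = 0).card = c0 :=
      cnt_fill_other χ (by decide) (by decide)
    rw [e1, e0] at this
    omega
  · -- b is colored 1 : fill fresh with 0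
    refine ⟨fill χ 0, consistent_of_agree s N hval hk hn m _ (fun x hx => fill_agree χ 0 hx), ?_⟩
    intro hP
    have hwb : fill χ 0 b = 1 := by rw [fill_agree χ 0 (by rw [hb]; decide), hb]
    have := hP 0 (by rw [hwb]; decide)
    rw [hwb] at this
    have e0 : (Finset.univ.filter fun x => fill χ 0 x = 0).card = c0 + c2 :=
      cnt_fill_self χ (by decide)
    have e1 : (Finset.univ.filter fun x => fill χ 0 x = 1).card = c1 :=
      cnt_fill_other χ (by decide) (by decide)
    rw [e0, e1] at this
    omega
  · -- b is fresh
    have hc2 : 1 ≤ c2 := by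
      apply Finset.card_pos.2
      exact ⟨b, by simp [cnt, hb]⟩
    have hbub : ∀ u : Fin 3, u ≠ 2 → ∀ x ∈ ({b} : Finset (Fin n)), χ x = 2 := by
      intro u _ x hx
      rw [Finset.mem_singleton.1 hx, hb]
    -- candidate A : b ↦ 0, other fresh ↦ 1
    by_cases hA : c0 + 1 ≤ c1 + (c2 - 1)
    · set w := fill (upd χ {b} 0) 1 with hw
      have hagree : ∀ x, χ x ≠ 2 → w x = χ x := by
        intro x hx
        rw [hw, fill_agree, upd_of_not_mem]
        · intro hxb
          rw [Finset.mem_singleton.1 hxb, hb] at hx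
          exact hx rfl
        · rw [upd_of_not_mem]
          · exact hx
          · intro hxb
            rw [Finset.mem_singleton.1 hxb, hb] at hx
            exact hx rfl
      refine ⟨w, consistent_of_agree s N hval hk hn m _ hagree, ?_⟩
      intro hP
      have hub : upd χ {b} 0 b = 0 := upd_of_mem _ _ _ (Finset.mem_singleton_self b)
      have hwb : w b = 0 := by rw [hw, fill_agree _ _ (by rw [hub]; decide), hub]
      have := hP 1 (by rw [hwb]; decide)
      rw [hwb] at this
      have hu0 : cnt 0 (upd χ {b} 0) = c0 + 1 := by
        rw [cnt_upd χ {b} 0 0 (hbub 0 (by decide)) (by decide) (by decide), if_pos rfl,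
          Finset.card_singleton]
      have hu1 : cnt 1 (upd χ {b} 0) = c1 := by
        rw [cnt_upd χ {b} 0 1 (hbub 0 (by decide)) (by decide) (by decide), if_neg (by decide)]
        exact Nat.add_zero _
      have hu2 : cnt 2 (upd χ {b} 0) = c2 - 1 := by
        rw [cnt_upd_two χ {b} (hbub 0 (by decide)) (by decide), Finset.card_singleton]
      have e1 : (Finset.univ.filter fun x => w x = 1).card = c1 + (c2 - 1) := by
        rw [hw]
        show cnt 1 (fill (upd χ {b} 0) 1) = _
        rw [cnt_fill_self _ (by decide), hu1, hu2]
      have e0 : (Finset.univ.filter fun x => w x = 0).card = c0 + 1 := by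
        rw [hw]
        show cnt 0 (fill (upd χ {b} 0) 1) = _
        rw [cnt_fill_other _ (by decide) (by decide), hu0]
      rw [e1, e0] at this
      omega
    · by_cases hB : c1 + 1 ≤ c0 + (c2 - 1)
      · set w := fill (upd χ {b} 1) 0 with hw
        have hagree : ∀ x, χ x ≠ 2 → w x = χ x := by
          intro x hx
          rw [hw, fill_agree, upd_of_not_mem]
          · intro hxb
            rw [Finset.mem_singleton.1 hxb, hb] at hx
            exact hx rfl
          · rw [upd_of_not_mem]
            · exact hx
            · intro hxb
              rw [Finset.mem_singleton.1 hxb, hb] at hx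
              exact hx rfl
        refine ⟨w, consistent_of_agree s N hval hk hn m _ hagree, ?_⟩
        intro hP
        have hub : upd χ {b} 1 b = 1 := upd_of_mem _ _ _ (Finset.mem_singleton_self b)
        have hwb : w b = 1 := by rw [hw, fill_agree _ _ (by rw [hub]; decide), hub]
        have := hP 0 (by rw [hwb]; decide)
        rw [hwb] at this
        have hu1 : cnt 1 (upd χ {b} 1) = c1 + 1 := by
          rw [cnt_upd χ {b} 1 1 (hbub 1 (by decide)) (by decide) (by decide), if_pos rfl,
            Finset.card_singleton]
        have hu0 : cnt 0 (upd χ {b} 1) = c0 := by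
          rw [cnt_upd χ {b} 1 0 (hbub 1 (by decide)) (by decide) (by decide), if_neg (by decide)]
          exact Nat.add_zero _
        have hu2 : cnt 2 (upd χ {b} 1) = c2 - 1 := by
          rw [cnt_upd_two χ {b} (hbub 1 (by decide)) (by decide), Finset.card_singleton]
        have e0 : (Finset.univ.filter fun x => w x = 0).card = c0 + (c2 - 1) := by
          rw [hw]
          show cnt 0 (fill (upd χ {b} 1) 0) = _
          rw [cnt_fill_self _ (by decide), hu0, hu2]
        have e1 : (Finset.univ.filter fun x => w x = 1).card = c1 + 1 := by
          rw [hw]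
          show cnt 1 (fill (upd χ {b} 1) 0) = _
          rw [cnt_fill_other _ (by decide) (by decide), hu1]
        rw [e0, e1] at this
        omega
      · exfalso
        have h0 : c0 ≤ N := hcaps.1
        have h1 : c1 ≤ N := hcaps.2
        omega

end Witness

end PLB

namespace PLB

open Finset PluralityGame Relation

variable {n : ℕ}

/-- two balls answered with the same color in a common query -/
def coRel (s : Strategy n) (N m : ℕ) : Fin n → Fin n → Prop :=
  fun x y => ∃ t, t < m ∧ x ∈ s (game s N t).2 ∧ y ∈ s (game s N t).2 ∧
    (game s N m).1 x = (game s N m).1 y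

lemma coRel_value {s : Strategy n} {N m : ℕ} {x y : Fin n}
    (h : EqvGen (coRel s N m) x y) : (game s N m).1 x = (game s N m).1 y := by
  induction h with
  | rel a b hab => obtain ⟨t, -, -, -, h⟩ := hab; exact h
  | refl a => rfl
  | symm a b _ ih => exact ih.symm
  | trans a b c _ _ ih1 ih2 => exact ih1.trans ih2

lemma plural_of_counts (w : Fin n → Fin 3) (v : Fin 3)
    (h : ∀ j : Fin 3, j ≠ v → cnt j w < cnt v w) : ∃ b, IsPlurality w b := by
  have hne : ∃ j : Fin 3, j ≠ v := by
    rcases fin3_cases v with rfl | rfl | rfl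
    exacts [⟨1, by decide⟩, ⟨0, by decide⟩, ⟨0, by decide⟩]
  obtain ⟨j, hj⟩ := hne
  have hpos : 0 < cnt v w := lt_of_le_of_lt (Nat.zero_le _) (h j hj)
  obtain ⟨b, hb⟩ := Finset.card_pos.1 hpos
  have hwb : w b = v := (Finset.mem_filter.1 hb).2
  refine ⟨b, fun j' hj' => ?_⟩
  show cnt j' w < cnt (w b) w
  rw [hwb]
  exact h j' (hwb ▸ hj')

lemma flp_facts (v : Fin 3) (h : v ≠ 2) :
    flp v ≠ 2 ∧ flp v ≠ v ∧ ∀ j : Fin 3, j = v ∨ j = flp v ∨ j = 2 := by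
  rcases fin3_cases v with rfl | rfl | rfl
  · exact ⟨by decide, by decide, by decide⟩
  · exact ⟨by decide, by decide, by decide⟩
  · exact absurd rfl h

section W2sec

variable (s : Strategy n) (N : ℕ) {k : ℕ}

lemma W2 (hval : s.Valid k) (hk : 2 ≤ k) (hn : n = N + N) (hN : 1 ≤ N) (m : ℕ)
    (hcond : (1 ≤ cnt 2 ((game s N m).1) ∨
        cnt 0 ((game s N m).1) ≠ cnt 1 ((game s N m).1)) ∨
      (cnt 2 ((game s N m).1) = 0 ∧ cnt 0 ((game s N m).1) = cnt 1 ((game s N m).1) ∧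
        ∃ z z', (game s N m).1 z ≠ 2 ∧ (game s N m).1 z = (game s N m).1 z' ∧
          ¬ EqvGen (coRel s N m) z z')) :
    ∃ w, Consistent s ((game s N m).1) w m ∧ ∃ b, IsPlurality w b := by
  classical
  set χ := (game s N m).1 with hχ
  have hcaps := caps_all s N hval hk hn m
  have hpart := cnt_partition χ
  rcases hcond with hfresh | ⟨hcnt2, hbal, z, z', hz2, hzz', hneq⟩
  · by_cases hA : cnt 0 χ + cnt 2 χ = cnt 1 χ
    · -- balanced after filling with 0: move one fresh ball to color 1 instead
      have hc2 : 1 ≤ cnt 2 χ := by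
        rcases hfresh with h | h
        · exact h
        · by_contra hc
          omega
      obtain ⟨z, hz⟩ := Finset.card_pos.1 hc2
      have hz2 : χ z = 2 := (Finset.mem_filter.1 hz).2
      have hsing : ∀ x ∈ ({z} : Finset (Fin n)), χ x = 2 := by
        intro x hx; rw [Finset.mem_singleton.1 hx]; exact hz2
      set w := fill (upd χ {z} 1) 0 with hw
      have hagree : ∀ x, χ x ≠ 2 → w x = χ x := by
        intro x hx
        have hxz : x ∉ ({z} : Finset (Fin n)) := by
          intro hh; rw [Finset.mem_singleton.1 hh] at hx; exact hx hz2
        rw [hw, fill_agree, upd_of_not_mem _ _ _ hxz]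
        rw [upd_of_not_mem _ _ _ hxz]; exact hx
      refine ⟨w, consistent_of_agree s N hval hk hn m _ hagree, ?_⟩
      have hu1 : cnt 1 (upd χ {z} 1) = cnt 1 χ + 1 := by
        rw [cnt_upd χ {z} 1 1 hsing (by decide) (by decide), if_pos rfl, Finset.card_singleton]
      have hu0 : cnt 0 (upd χ {z} 1) = cnt 0 χ := by
        rw [cnt_upd χ {z} 1 0 hsing (by decide) (by decide), if_neg (by decide)]
        exact Nat.add_zero _
      have hu2 : cnt 2 (upd χ {z} 1) = cnt 2 χ - 1 := by
        rw [cnt_upd_two χ {z} hsing (by decide), Finset.card_singleton]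
      have e0 : cnt 0 w = cnt 0 χ + (cnt 2 χ - 1) := by
        rw [hw, cnt_fill_self _ (by decide), hu0, hu2]
      have e1 : cnt 1 w = cnt 1 χ + 1 := by
        rw [hw, cnt_fill_other _ (by decide) (by decide), hu1]
      have e2 : cnt 2 w = 0 := by rw [hw, cnt_fill_two _ (by decide)]
      apply plural_of_counts w 1
      intro j hj
      rcases fin3_cases j with rfl | rfl | rfl
      · rw [e0, e1]; omega
      · exact absurd rfl hj
      · rw [e2, e1]; omega
    · -- unbalanced after filling with 0
      set w := fill χ 0 with hw
      refine ⟨w, consistent_of_agree s N hval hk hn m _ (fun x hx => fill_agree χ 0 hx), ?_⟩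
      have e0 : cnt 0 w = cnt 0 χ + cnt 2 χ := by rw [hw, cnt_fill_self _ (by decide)]
      have e1 : cnt 1 w = cnt 1 χ := by rw [hw, cnt_fill_other _ (by decide) (by decide)]
      have e2 : cnt 2 w = 0 := by rw [hw, cnt_fill_two _ (by decide)]
      rcases Nat.lt_or_ge (cnt 1 χ) (cnt 0 χ + cnt 2 χ) with hlt | hge
      · apply plural_of_counts w 0
        intro j hj
        rcases fin3_cases j with rfl | rfl | rfl
        · exact absurd rfl hj
        · rw [e0, e1]; omega
        · rw [e2, e0]; omega
      · have hlt : cnt 0 χ + cnt 2 χ < cnt 1 χ := by omega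
        apply plural_of_counts w 1
        intro j hj
        rcases fin3_cases j with rfl | rfl | rfl
        · rw [e0, e1]; omega
        · exact absurd rfl hj
        · rw [e2, e1]; omega
  · -- the flip witness
    have hall : ∀ x, χ x ≠ 2 := by
      intro x hx
      have hmem : x ∈ Finset.univ.filter (fun y => χ y = 2) :=
        Finset.mem_filter.2 ⟨Finset.mem_univ x, hx⟩
      have : Finset.univ.filter (fun y : Fin n => χ y = 2) = ∅ := Finset.card_eq_zero.1 hcnt2
      rw [this] at hmem
      exact absurd hmem (Finset.notMem_empty x)
    set v := χ z with hv
    obtain ⟨hv2', hvne, htrich⟩ := flp_facts v hz2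
    set T := Finset.univ.filter (fun x => EqvGen (coRel s N m) z x) with hT
    have hmemT : ∀ x, x ∈ T ↔ EqvGen (coRel s N m) z x := by
      intro x; rw [hT]; simp
    have hTval : ∀ x ∈ T, χ x = v := by
      intro x hx
      rw [hv, hχ]
      exact (coRel_value ((hmemT x).1 hx)).symm
    set w := fun x => if x ∈ T then (2 : Fin 3) else χ x with hw
    have hzT : z ∈ T := (hmemT z).2 (EqvGen.refl z)
    have hz'T : z' ∉ T := fun h => hneq ((hmemT z').1 h)
    have hcompat : ∀ t < m, ∀ x ∈ s (game s N t).2, ∀ y ∈ s (game s N t).2,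
        (w x = w y ↔ χ x = χ y) := by
      intro t htm x hx y hy
      have hxc : χ x ≠ 2 := (q_colored_final s N hval hk hn htm hx).2
      have hyc : χ y ≠ 2 := (q_colored_final s N hval hk hn htm hy).2
      constructor
      · intro hwxy
        by_cases hxT : x ∈ T <;> by_cases hyT : y ∈ T
        · rw [hTval x hxT, hTval y hyT]
        · rw [hw] at hwxy; simp only [if_pos hxT, if_neg hyT] at hwxy
          exact absurd hwxy.symm hyc
        · rw [hw] at hwxy; simp only [if_neg hxT, if_pos hyT] at hwxy
          exact absurd hwxy hxc
        · rw [hw] at hwxy; simp only [if_neg hxT, if_neg hyT] at hwxy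
          exact hwxy
      · intro hxy
        have hrel : EqvGen (coRel s N m) x y := EqvGen.rel _ _ ⟨t, htm, hx, hy, hxy⟩
        by_cases hxT : x ∈ T
        · have hyT : y ∈ T := (hmemT y).2 (((hmemT x).1 hxT).trans _ _ _ hrel)
          rw [hw]; simp only [if_pos hxT, if_pos hyT]
        · have hyT : y ∉ T := fun hyT =>
            hxT ((hmemT x).2 (((hmemT y).1 hyT).trans _ _ _ (hrel.symm _ _)))
          rw [hw]; simp only [if_neg hxT, if_neg hyT]
          exact hxy
    refine ⟨w, consistent_of_compat s N hval hk hn m w hcompat, ?_⟩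
    -- counting
    have hTsub : T ⊆ Finset.univ.filter (fun x => χ x = v) := by
      intro x hx
      exact Finset.mem_filter.2 ⟨Finset.mem_univ x, hTval x hx⟩
    have hz'mem : z' ∈ Finset.univ.filter (fun x => χ x = v) := by
      refine Finset.mem_filter.2 ⟨Finset.mem_univ z', ?_⟩
      rw [hv]; exact hzz'.symm
    have hssub : T ⊂ Finset.univ.filter (fun x => χ x = v) :=
      (Finset.ssubset_iff_of_subset hTsub).2 ⟨z', hz'mem, hz'T⟩
    have hτ1 : 1 ≤ T.card := Finset.card_pos.2 ⟨z, hzT⟩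
    have hτN : T.card < cnt v χ := Finset.card_lt_card hssub
    have hvN : cnt v χ = N ∧ cnt (flp v) χ = N := by
      have hc : cnt 0 χ = N ∧ cnt 1 χ = N := by omega
      rcases fin3_cases v with hv0 | hv0 | hv0
      · rw [hv0]
        exact ⟨hc.1, by rw [show flp 0 = 1 by decide]; exact hc.2⟩
      · rw [hv0]
        exact ⟨hc.2, by rw [show flp 1 = 0 by decide]; exact hc.1⟩
      · exact absurd hv0 hz2
    have e2 : cnt 2 w = T.card := by
      show (Finset.univ.filter (fun x => w x = 2)).card = _
      congr 1
      ext x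
      simp only [Finset.mem_filter, Finset.mem_univ, true_and]
      by_cases hxT : x ∈ T
      · rw [hw]; simp only [if_pos hxT]; simp [hxT]
      · rw [hw]; simp only [if_neg hxT]
        constructor
        · intro h; exact absurd h (hall x)
        · intro h; exact absurd h hxT
    have ev : cnt v w = cnt v χ - T.card := by
      show (Finset.univ.filter (fun x => w x = v)).card = _
      rw [show cnt v χ = (Finset.univ.filter (fun x => χ x = v)).card from rfl,
        ← Finset.card_sdiff_of_subset hTsub]
      congr 1
      ext x
      simp only [Finset.mem_filter, Finset.mem_univ, true_and, Finset.mem_sdiff]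
      by_cases hxT : x ∈ T
      · rw [hw]; simp only [if_pos hxT]
        constructor
        · intro h; exact absurd h.symm hz2
        · rintro ⟨-, h⟩; exact absurd hxT h
      · rw [hw]; simp only [if_neg hxT]
        constructor
        · intro h; exact ⟨h, hxT⟩
        · rintro ⟨h, -⟩; exact h
    have ev' : cnt (flp v) w = cnt (flp v) χ := by
      show (Finset.univ.filter (fun x => w x = flp v)).card
          = (Finset.univ.filter (fun x => χ x = flp v)).card
      congr 1
      ext x
      simp only [Finset.mem_filter, Finset.mem_univ, true_and]
      by_cases hxT : x ∈ T
      · rw [hw]; simp only [if_pos hxT]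
        constructor
        · intro h; exact absurd h.symm hv2'
        · intro h; rw [hTval x hxT] at h; exact absurd h.symm hvne
      · rw [hw]; simp only [if_neg hxT]
    apply plural_of_counts w (flp v)
    intro j hj
    rcases htrich j with rfl | rfl | rfl
    · rw [ev, ev', hvN.1, hvN.2]; omega
    · exact absurd rfl hj
    · rw [e2, ev', hvN.2]; omega

end W2sec

end PLB

namespace PLB

open Finset PluralityGame Relation

variable {n : ℕ}

section Count

variable (s : Strategy n) (N : ℕ) {k : ℕ}

/-- relation generated by the first j rounds -/
def relUpTo (m j : ℕ) : Fin n → Fin n → Prop :=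
  fun x y => ∃ t, t < j ∧ x ∈ s (game s N t).2 ∧ y ∈ s (game s N t).2 ∧
    (game s N m).1 x = (game s N m).1 y

lemma relUpTo_full (m : ℕ) : relUpTo s N m m = coRel s N m := rfl

/-- the part of the query of round t with final color v -/
noncomputable def partv (m t : ℕ) (v : Fin 3) : Finset (Fin n) :=
  (s (game s N t).2).filter (fun x => (game s N m).1 x = v)

lemma part_card (hval : s.Valid k) (hk : 2 ≤ k) (hn : n = N + N) {m t : ℕ} (htm : t < m) :
    (partv s N m t 0).card + (partv s N m t 1).card = k := by
  classical
  have h := Finset.card_filter_add_card_filter_not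
    (s := s (game s N t).2) (p := fun x => (game s N m).1 x = 0)
  have he : (s (game s N t).2).filter (fun x => ¬ (game s N m).1 x = 0)
      = partv s N m t 1 := by
    apply Finset.filter_congr
    intro x hx
    have hc := (q_colored_final s N hval hk hn htm hx).2
    constructor
    · intro h0
      rcases fin3_cases ((game s N m).1 x) with h' | h' | h'
      · exact absurd h' h0
      · exact h'
      · exact absurd h' hc
    · intro h1 h0
      rw [h0] at h1
      exact absurd h1 (by decide)
  rw [he] at h
  rw [← hval (game s N t).2]
  exact h

lemma ncl_step (hval : s.Valid k) (hk : 2 ≤ k) (hn : n = N + N) {m t : ℕ} (htm : t < m) :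
    ncl (relUpTo s N m t) ≤ ncl (relUpTo s N m (t+1))
      + (((partv s N m t 0).card - 1) + ((partv s N m t 1).card - 1)) := by
  classical
  set P0 := partv s N m t 0
  set P1 := partv s N m t 1
  set r := relUpTo s N m t with hr
  set r1 := fun x y => r x y ∨ (x ∈ P0 ∧ y ∈ P0) with hr1
  set r2 := fun x y => r1 x y ∨ (x ∈ P1 ∧ y ∈ P1) with hr2
  have hcong : ncl r2 = ncl (relUpTo s N m (t+1)) := by
    apply ncl_congr
    intro x y
    constructor
    · intro h
      rcases h with (h | ⟨hx, hy⟩) | ⟨hx, hy⟩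
      · obtain ⟨t', ht', h1, h2, h3⟩ := h
        exact ⟨t', by omega, h1, h2, h3⟩
      · refine ⟨t, by omega, (Finset.mem_filter.1 hx).1, (Finset.mem_filter.1 hy).1, ?_⟩
        rw [(Finset.mem_filter.1 hx).2, (Finset.mem_filter.1 hy).2]
      · refine ⟨t, by omega, (Finset.mem_filter.1 hx).1, (Finset.mem_filter.1 hy).1, ?_⟩
        rw [(Finset.mem_filter.1 hx).2, (Finset.mem_filter.1 hy).2]
    · rintro ⟨t', ht', h1, h2, h3⟩
      rcases Nat.lt_succ_iff_lt_or_eq.1 ht' with ht'' | rfl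
      · exact Or.inl (Or.inl ⟨t', ht'', h1, h2, h3⟩)
      · have hc := (q_colored_final s N hval hk hn htm h1).2
        rcases fin3_cases ((game s N m).1 x) with h' | h' | h'
        · exact Or.inl (Or.inr ⟨Finset.mem_filter.2 ⟨h1, h'⟩,
            Finset.mem_filter.2 ⟨h2, h3 ▸ h'⟩⟩)
        · exact Or.inr ⟨Finset.mem_filter.2 ⟨h1, h'⟩, Finset.mem_filter.2 ⟨h2, h3 ▸ h'⟩⟩
        · exact absurd h' hc
  calc ncl r ≤ ncl r1 + (P0.card - 1) := ncl_le_pairs r P0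
    _ ≤ (ncl r2 + (P1.card - 1)) + (P0.card - 1) :=
        Nat.add_le_add_right (ncl_le_pairs r1 P1) _
    _ = ncl (relUpTo s N m (t+1)) + ((P0.card - 1) + (P1.card - 1)) := by
        rw [hcong]; omega

lemma relUpTo_zero_false (m : ℕ) {x y : Fin n} : relUpTo s N m 0 x y ↔ False := by
  constructor
  · rintro ⟨t, ht, -⟩; omega
  · exact False.elim

lemma ncl_zero (m : ℕ) : ncl (relUpTo s N m 0) = n := by
  rw [ncl_congr (r' := fun (_ _ : Fin n) => False) (fun x y => relUpTo_zero_false s N m)]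
  rw [ncl_bot, Fintype.card_fin]

lemma ncl_chain (hval : s.Valid k) (hk : 2 ≤ k) (hn : n = N + N) (m : ℕ) :
    n ≤ ncl (relUpTo s N m m) + ∑ t ∈ Finset.range m,
      (((partv s N m t 0).card - 1) + ((partv s N m t 1).card - 1)) := by
  have key : ∀ j ≤ m, n ≤ ncl (relUpTo s N m j) + ∑ t ∈ Finset.range j,
      (((partv s N m t 0).card - 1) + ((partv s N m t 1).card - 1)) := by
    intro j
    induction j with
    | zero => intro _; rw [ncl_zero]; simp
    | succ j ih =>
      intro hjm
      have h1 := ih (by omega)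
      have h2 := ncl_step s N hval hk hn (show j < m by omega)
      rw [Finset.sum_range_succ]
      omega
  exact key m le_rfl

-- per-round count change bounds
lemma cnt_succ_le (hval : s.Valid k) (hk : 2 ≤ k) (hn : n = N + N) {m t : ℕ} (htm : t < m)
    {i : Fin 3} (hi : i ≠ 2) :
    cnt i ((game s N (t+1)).1) ≤ cnt i ((game s N t).1) + (partv s N m t i).card := by
  classical
  have hsub : Finset.univ.filter (fun x => (game s N (t+1)).1 x = i)
      ⊆ Finset.univ.filter (fun x => (game s N t).1 x = i) ∪ partv s N m t i := by
    intro x hx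
    have hxi : (game s N (t+1)).1 x = i := (Finset.mem_filter.1 hx).2
    by_cases hfr : (game s N t).1 x = 2
    · -- x was fresh, so x ∈ q and its final color is i
      have hxq : x ∈ s (game s N t).2 := by
        by_contra hxq
        have := (spec_all s N hval hk hn t).1 x (fun ⟨h1, _⟩ => hxq h1)
        rw [hxi] at this
        rw [← this] at hfr
        exact hi hfr
      have hfin : (game s N m).1 x = i := by
        have h1 := (q_colored_final s N hval hk hn htm hxq).1
        rw [h1, hxi]
      exact Finset.mem_union_right _ (Finset.mem_filter.2 ⟨hxq, hfin⟩)
    · have := (spec_all s N hval hk hn t).1 x (fun ⟨_, h2⟩ => hfr h2)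
      apply Finset.mem_union_left
      refine Finset.mem_filter.2 ⟨Finset.mem_univ x, ?_⟩
      rw [← this, hxi]
  calc cnt i ((game s N (t+1)).1)
      ≤ (Finset.univ.filter (fun x => (game s N t).1 x = i) ∪ partv s N m t i).card :=
        Finset.card_le_card hsub
    _ ≤ cnt i ((game s N t).1) + (partv s N m t i).card := Finset.card_union_le _ _

lemma chi_succ_eq_of_nofresh (hval : s.Valid k) (hk : 2 ≤ k) (hn : n = N + N) {t : ℕ}
    (hnf : ∀ x ∈ s (game s N t).2, (game s N t).1 x ≠ 2) :
    (game s N (t+1)).1 = (game s N t).1 := by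
  funext x
  apply (spec_all s N hval hk hn t).1
  rintro ⟨h1, h2⟩
  exact hnf x h1 h2

set_option maxHeartbeats 1000000 in
/-- a monochromatic round with a fresh ball forces a full side (at time t already) -/
lemma mono_round (hval : s.Valid k) (hk : 2 ≤ k) (hn : n = N + N) {m t : ℕ} (htm : t < m)
    (hone : ¬ ((partv s N m t 0).Nonempty ∧ (partv s N m t 1).Nonempty))
    (hfresh : ∃ x ∈ s (game s N t).2, (game s N t).1 x = 2) :
    cnt 0 ((game s N t).1) = N ∨ cnt 1 ((game s N t).1) = N := by
  classical
  have hqne : (s (game s N t).2).Nonempty := by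
    apply Finset.card_pos.1
    rw [hval (game s N t).2]
    omega
  -- determine the common color
  have hcases : (∀ x ∈ s (game s N t).2, (game s N m).1 x = 0) ∨
      (∀ x ∈ s (game s N t).2, (game s N m).1 x = 1) := by
    rcases Finset.eq_empty_or_nonempty (partv s N m t 1) with h1 | h1
    · left
      intro x hx
      have hc := (q_colored_final s N hval hk hn htm hx).2
      rcases fin3_cases ((game s N m).1 x) with h' | h' | h'
      · exact h'
      · exfalso
        have : x ∈ partv s N m t 1 := Finset.mem_filter.2 ⟨hx, h'⟩
        rw [h1] at this
        exact absurd this (Finset.notMem_empty x)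
      · exact absurd h' hc
    · rcases Finset.eq_empty_or_nonempty (partv s N m t 0) with h0 | h0
      · right
        intro x hx
        have hc := (q_colored_final s N hval hk hn htm hx).2
        rcases fin3_cases ((game s N m).1 x) with h' | h' | h'
        · exfalso
          have : x ∈ partv s N m t 0 := Finset.mem_filter.2 ⟨hx, h'⟩
          rw [h0] at this
          exact absurd this (Finset.notMem_empty x)
        · exact h'
        · exact absurd h' hc
      · exact absurd ⟨h0, h1⟩ hone
  -- the new coloring is monochromatic on the query
  have hspec := spec_all s N hval hk hn t
  rcases hcases with hmono | hmono
  · -- all color 0 at the end, hence also at time t+1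
    have hnew : ∀ x ∈ s (game s N t).2, (game s N (t+1)).1 x = 0 := by
      intro x hx
      rw [← (q_colored_final s N hval hk hn htm hx).1]
      exact hmono x hx
    have hfull := hspec.2.2.2 hfresh
      (fun x hx y hy => by rw [hnew x hx, hnew y hy]) hqne.choose hqne.choose_spec
    rw [hnew _ hqne.choose_spec] at hfull
    rw [show flp 0 = 1 by decide] at hfull
    -- count of color 1 did not change this round
    right
    have hsame : cnt 1 ((game s N (t+1)).1) = cnt 1 ((game s N t).1) := by
      show (Finset.univ.filter (fun x => (game s N (t+1)).1 x = 1)).card = _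
      congr 1
      ext x
      simp only [Finset.mem_filter, Finset.mem_univ, true_and]
      by_cases hxq : x ∈ s (game s N t).2
      · rw [hnew x hxq]
        constructor
        · intro h; exact absurd h (by decide)
        · intro h
          exfalso
          by_cases hfr : (game s N t).1 x = 2
          · rw [hfr] at h; exact absurd h (by decide)
          · have := hspec.1 x (fun ⟨_, h2⟩ => hfr h2)
            rw [hnew x hxq] at this
            rw [← this] at h
            exact absurd h (by decide)
      · rw [hspec.1 x (fun ⟨h1, _⟩ => hxq h1)]
    rw [← hsame]
    exact hfull
  · have hnew : ∀ x ∈ s (game s N t).2, (game s N (t+1)).1 x = 1 := by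
      intro x hx
      rw [← (q_colored_final s N hval hk hn htm hx).1]
      exact hmono x hx
    have hfull := hspec.2.2.2 hfresh
      (fun x hx y hy => by rw [hnew x hx, hnew y hy]) hqne.choose hqne.choose_spec
    rw [hnew _ hqne.choose_spec] at hfull
    rw [show flp 1 = 0 by decide] at hfull
    left
    have hsame : cnt 0 ((game s N (t+1)).1) = cnt 0 ((game s N t).1) := by
      show (Finset.univ.filter (fun x => (game s N (t+1)).1 x = 0)).card = _
      congr 1
      ext x
      simp only [Finset.mem_filter, Finset.mem_univ, true_and]
      by_cases hxq : x ∈ s (game s N t).2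
      · rw [hnew x hxq]
        constructor
        · intro h; exact absurd h (by decide)
        · intro h
          exfalso
          by_cases hfr : (game s N t).1 x = 2
          · rw [hfr] at h; exact absurd h (by decide)
          · have := hspec.1 x (fun ⟨_, h2⟩ => hfr h2)
            rw [hnew x hxq] at this
            rw [← this] at h
            exact absurd h (by decide)
      · rw [hspec.1 x (fun ⟨h1, _⟩ => hxq h1)]
    rw [← hsame]
    exact hfull

end Count

end PLB

namespace PLB

open Finset PluralityGame Relation

variable {n : ℕ}

section Final

variable (s : Strategy n) (N : ℕ) {k : ℕ}

/-- weighted count of rounds whose answer has two nonempty parts -/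
noncomputable def goodCount (m : ℕ) : ℕ :=
  ∑ t ∈ Finset.range m, (min (partv s N m t 0).card 1) * (min (partv s N m t 1).card 1)

lemma crisis (hval : s.Valid k) (hk : 2 ≤ k) (hn : n = N + N) (m : ℕ)
    (hfin : cnt 0 ((game s N m).1) = N ∨ cnt 1 ((game s N m).1) = N) :
    N ≤ (k-1) * goodCount s N m := by
  classical
  have hex : ∃ T, T ≤ m ∧ (cnt 0 ((game s N T).1) = N ∨ cnt 1 ((game s N T).1) = N) :=
    ⟨m, le_rfl, hfin⟩
  set T0 := Nat.find hex with hT0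
  have hQ := Nat.find_spec hex
  rw [← hT0] at hQ
  have key : ∀ T, T ≤ T0 →
      cnt 0 ((game s N T).1) ≤
        (k-1) * (∑ t ∈ Finset.range T, (min (partv s N m t 0).card 1) * (min (partv s N m t 1).card 1))
      ∧ cnt 1 ((game s N T).1) ≤
        (k-1) * (∑ t ∈ Finset.range T, (min (partv s N m t 0).card 1) * (min (partv s N m t 1).card 1)) := by
    intro T
    induction T with
    | zero =>
      intro _
      constructor <;>
      · show cnt _ (fun _ => (2 : Fin 3)) ≤ _
        simp [cnt]
    | succ T ih =>
      intro hT1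
      have hT : T < T0 := by omega
      have hTm : T < m := by
        have := hQ.1
        omega
      obtain ⟨ih0, ih1⟩ := ih (by omega)
      have hab : (partv s N m T 0).card + (partv s N m T 1).card = k :=
        part_card s N hval hk hn hTm
      by_cases hg : 0 < (partv s N m T 0).card ∧ 0 < (partv s N m T 1).card
      · obtain ⟨hg0, hg1⟩ := hg
        have h0 := cnt_succ_le s N hval hk hn hTm (i := 0) (by decide)
        have h1 := cnt_succ_le s N hval hk hn hTm (i := 1) (by decide)
        rw [Finset.sum_range_succ]
        have hterm : (min (partv s N m T 0).card 1) * (min (partv s N m T 1).card 1) = 1 := by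
          rw [min_eq_right hg0, min_eq_right hg1]
        rw [hterm, Nat.mul_add, Nat.mul_one]
        constructor
        · exact le_trans h0 (Nat.add_le_add ih0 (by omega))
        · exact le_trans h1 (Nat.add_le_add ih1 (by omega))
      · by_cases hfr : ∃ x ∈ s (game s N T).2, (game s N T).1 x = 2
        · exfalso
          have hone : ¬ ((partv s N m T 0).Nonempty ∧ (partv s N m T 1).Nonempty) := by
            intro hgood
            exact hg ⟨Finset.card_pos.2 hgood.1, Finset.card_pos.2 hgood.2⟩
          have hfull := mono_round s N hval hk hn hTm hone hfr
          exact Nat.find_min hex hT ⟨by omega, hfull⟩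
        · push_neg at hfr
          have heq := chi_succ_eq_of_nofresh s N hval hk hn hfr
          rw [Finset.sum_range_succ]
          constructor
          · rw [heq]
            exact le_trans ih0 (Nat.mul_le_mul_left _ (by omega))
          · rw [heq]
            exact le_trans ih1 (Nat.mul_le_mul_left _ (by omega))
  have hkey := key T0 le_rfl
  have hfin0 : N ≤ (k-1) * (∑ t ∈ Finset.range T0,
      (min (partv s N m t 0).card 1) * (min (partv s N m t 1).card 1)) := by
    rcases hQ.2 with h | h
    · have := hkey.1; omega
    · have := hkey.2; omega
  refine le_trans hfin0 (Nat.mul_le_mul_left _ ?_)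
  unfold goodCount
  apply Finset.sum_le_sum_of_subset
  exact Finset.range_subset_range.2 hQ.1

open Classical in
lemma ncl_final_le (m : ℕ)
    (hall : ∀ x, (game s N m).1 x ≠ 2)
    (h0 : 0 < cnt 0 ((game s N m).1)) (h1 : 0 < cnt 1 ((game s N m).1))
    (hequiv : ∀ z z' : Fin n, (game s N m).1 z ≠ 2 → (game s N m).1 z = (game s N m).1 z' →
      EqvGen (coRel s N m) z z') :
    ncl (coRel s N m) ≤ 2 := by
  obtain ⟨x0, hx0⟩ := Finset.card_pos.1 h0
  obtain ⟨x1, hx1⟩ := Finset.card_pos.1 h1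
  have hx0v : (game s N m).1 x0 = 0 := (Finset.mem_filter.1 hx0).2
  have hx1v : (game s N m).1 x1 = 1 := (Finset.mem_filter.1 hx1).2
  have hsub : (Finset.univ.image
        (fun x => Finset.univ.filter (fun y => EqvGen (coRel s N m) x y)))
      ⊆ {Finset.univ.filter (fun y => EqvGen (coRel s N m) x0 y),
         Finset.univ.filter (fun y => EqvGen (coRel s N m) x1 y)} := by
    intro C hC
    obtain ⟨x, -, rfl⟩ := Finset.mem_image.1 hC
    rcases fin3_cases ((game s N m).1 x) with h | h | h
    · apply Finset.mem_insert.2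
      left
      exact cls_eq_iff.2 (hequiv x x0 (by rw [h]; decide) (by rw [h, hx0v]))

    · apply Finset.mem_insert.2
      right
      apply Finset.mem_singleton.2
      exact cls_eq_iff.2 (hequiv x x1 (by rw [h]; decide) (by rw [h, hx1v]))
    · exact absurd h (hall x)
  calc ncl (coRel s N m)
      ≤ ({Finset.univ.filter (fun y => EqvGen (coRel s N m) x0 y),
          Finset.univ.filter (fun y => EqvGen (coRel s N m) x1 y)} :
            Finset (Finset (Fin n))).card := Finset.card_le_card hsub
    _ ≤ 2 := Finset.card_insert_le _ _ |>.trans (by simp)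

/-- The main counting bound. -/
lemma nat_main (hval : s.Valid k) (hk : 2 ≤ k) (hn : n = N + N) (hN : 1 ≤ N) (m : ℕ)
    (hsol : SolvesPlurality s m) :
    (n - 2) * (k - 1) + N ≤ m * ((k-1) * (k-1)) := by
  classical
  set χ := (game s N m).1 with hχ
  have hb2 : ∀ c', Consistent s χ c' m → ∀ b, ¬ IsPlurality c' b := by
    rcases hsol χ with ⟨b, hb⟩ | h2
    · obtain ⟨w, hw, hnp⟩ := W1 s N hval hk hn m b
      exact absurd (hb w hw) hnp
    · exact h2
  have hW2fail : ¬ ((1 ≤ cnt 2 χ ∨ cnt 0 χ ≠ cnt 1 χ) ∨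
      (cnt 2 χ = 0 ∧ cnt 0 χ = cnt 1 χ ∧ ∃ z z', χ z ≠ 2 ∧ χ z = χ z' ∧
        ¬ EqvGen (coRel s N m) z z')) := by
    intro hcond
    obtain ⟨w, hw, b, hplural⟩ := W2 s N hval hk hn hN m hcond
    exact hb2 w hw b hplural
  have hc2 : cnt 2 χ = 0 := by
    by_contra h
    exact hW2fail (Or.inl (Or.inl (by omega)))
  have hc01 : cnt 0 χ = cnt 1 χ := by
    by_contra h
    exact hW2fail (Or.inl (Or.inr h))
  have hequiv : ∀ z z', χ z ≠ 2 → χ z = χ z' → EqvGen (coRel s N m) z z' := by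
    intro z z' h1 h2
    by_contra h3
    exact hW2fail (Or.inr ⟨hc2, hc01, z, z', h1, h2, h3⟩)
  have hpart := cnt_partition χ
  have hc0 : cnt 0 χ = N := by omega
  have hc1 : cnt 1 χ = N := by omega
  have hall : ∀ x, χ x ≠ 2 := by
    intro x hx
    have hmem : x ∈ Finset.univ.filter (fun y => χ y = 2) :=
      Finset.mem_filter.2 ⟨Finset.mem_univ x, hx⟩
    have he : Finset.univ.filter (fun y : Fin n => χ y = 2) = ∅ := Finset.card_eq_zero.1 hc2
    rw [he] at hmem
    exact absurd hmem (Finset.notMem_empty x)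
  -- class bound
  have hncl : ncl (coRel s N m) ≤ 2 :=
    ncl_final_le s N m hall (show 0 < cnt 0 χ by omega) (show 0 < cnt 1 χ by omega) hequiv
  -- connectivity gives the total merge work
  have hchain := ncl_chain s N hval hk hn m
  rw [relUpTo_full] at hchain
  have hchain2 : n ≤ ncl (coRel s N m) + ∑ t ∈ Finset.range m,
      (((partv s N m t 0).card - 1) + ((partv s N m t 1).card - 1)) := hchain
  have hDge : n - 2 ≤ ∑ t ∈ Finset.range m,
      (((partv s N m t 0).card - 1) + ((partv s N m t 1).card - 1)) := by
    apply Nat.sub_le_iff_le_add.2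
    calc n ≤ ncl (coRel s N m) + ∑ t ∈ Finset.range m,
          (((partv s N m t 0).card - 1) + ((partv s N m t 1).card - 1)) := hchain2
      _ ≤ 2 + ∑ t ∈ Finset.range m,
          (((partv s N m t 0).card - 1) + ((partv s N m t 1).card - 1)) :=
            Nat.add_le_add_right hncl _
      _ = (∑ t ∈ Finset.range m,
          (((partv s N m t 0).card - 1) + ((partv s N m t 1).card - 1))) + 2 :=
            Nat.add_comm _ _
  -- the per-round identity
  have hsum : ∀ t ∈ Finset.range m,
      ((((partv s N m t 0).card - 1) + ((partv s N m t 1).card - 1))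
        + (min (partv s N m t 0).card 1) * (min (partv s N m t 1).card 1)) = k - 1 := by
    intro t ht
    have hpc := part_card s N hval hk hn (Finset.mem_range.1 ht)
    rcases Nat.eq_zero_or_pos (partv s N m t 0).card with h0 | h0
    · have hm : min (partv s N m t 0).card 1 = 0 := by omega
      rw [hm, Nat.zero_mul]
      omega
    · rcases Nat.eq_zero_or_pos (partv s N m t 1).card with h1 | h1
      · have hm : min (partv s N m t 1).card 1 = 0 := by omega
        rw [hm, Nat.mul_zero]
        omega
      · rw [min_eq_right h0, min_eq_right h1, Nat.one_mul]
        omega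
  have htot : (∑ t ∈ Finset.range m,
      (((partv s N m t 0).card - 1) + ((partv s N m t 1).card - 1)))
      + goodCount s N m = m * (k-1) := by
    rw [goodCount, ← Finset.sum_add_distrib, Finset.sum_congr rfl hsum,
      Finset.sum_const, Finset.card_range, smul_eq_mul]
  -- the crisis bound
  have hcrisis : N ≤ (k-1) * goodCount s N m :=
    crisis s N hval hk hn m (Or.inl hc0)
  -- assemble
  calc (n - 2) * (k - 1) + N
      ≤ (∑ t ∈ Finset.range m,
          (((partv s N m t 0).card - 1) + ((partv s N m t 1).card - 1))) * (k-1)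
        + (k-1) * goodCount s N m :=
        Nat.add_le_add (Nat.mul_le_mul_right _ hDge) hcrisis
    _ = ((∑ t ∈ Finset.range m,
          (((partv s N m t 0).card - 1) + ((partv s N m t 1).card - 1)))
        + goodCount s N m) * (k-1) := by ring
    _ = (m * (k-1)) * (k-1) := by rw [htot]
    _ = m * ((k-1) * (k-1)) := by ring

end Final

end PLB


open PluralityGame PLB

theorem plurality_lower_bound_even (n k : ℕ) (hk : 2 ≤ k) (hkn : k ≤ n) (hn : Even n) :
    ((n : ℝ) - 2) / ((k : ℝ) - 1) + (n : ℝ) / (2 * ((k : ℝ) - 1) ^ 2) ≤ (Ap n k : ℝ) := by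
  obtain ⟨N, hnN⟩ := hn
  have h2n : 2 ≤ n := le_trans hk hkn
  have hN : 1 ≤ N := by omega
  have hSne : { m | ∃ s : Strategy n, s.Valid k ∧ SolvesPlurality s m }.Nonempty :=
    ⟨(allQ n k).length, bigS n k hkn, bigS_valid n k hkn, bigS_solves n k hk hkn⟩
  have hmem : Ap n k ∈ { m | ∃ s : Strategy n, s.Valid k ∧ SolvesPlurality s m } :=
    Nat.sInf_mem hSne
  obtain ⟨s, hval, hsol⟩ := hmem
  have hnat := nat_main s N hval hk hnN hN (Ap n k) hsol
  have hk1 : (0:ℝ) < (k:ℝ) - 1 := by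
    have h2 : (2:ℝ) ≤ (k:ℝ) := by exact_mod_cast hk
    linarith
  have hcast : ((n:ℝ) - 2) * ((k:ℝ) - 1) + (n:ℝ)/2
      ≤ (Ap n k : ℝ) * (((k:ℝ)-1) * ((k:ℝ)-1)) := by
    have hcast1 : (((n - 2) * (k-1) + N : ℕ) : ℝ)
        ≤ ((Ap n k * ((k-1)*(k-1)) : ℕ) : ℝ) := by exact_mod_cast hnat
    push_cast [Nat.cast_sub h2n, Nat.cast_sub (by omega : 1 ≤ k)] at hcast1
    have hNhalf : (N:ℝ) = (n:ℝ)/2 := by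
      have hn2 : (n:ℝ) = (N:ℝ) + (N:ℝ) := by exact_mod_cast hnN
      linarith
    rw [hNhalf] at hcast1
    linarith
  have hEq : ((n : ℝ) - 2) / ((k : ℝ) - 1) + (n : ℝ) / (2 * ((k : ℝ) - 1) ^ 2)
      = (((n:ℝ) - 2) * ((k:ℝ) - 1) + (n:ℝ)/2) / (((k:ℝ)-1)^2) := by
    field_simp
  rw [hEq, div_le_iff₀ (by positivity)]
  calc ((n:ℝ) - 2) * ((k:ℝ) - 1) + (n:ℝ)/2
      ≤ (Ap n k : ℝ) * (((k:ℝ)-1) * ((k:ℝ)-1)) := hcast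
    _ = (Ap n k : ℝ) * ((k:ℝ)-1)^2 := by ring
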